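/- For every integer K ≥ 1 and every odd index j with 1 ≤ j ≤ 2K+1, the log-canonical bracket of the cluster parametrization satisfies {s_j, λ}_y = −s_j λ, as an identity of rational functions of y on (ℂ*)^{2K}. -/

import Mathlib

noncomputable section

open Finset

/-- The space of cluster variables `(y_1, …, y_{2K})`; we use 1-based indexing, so the
vector has `2K+1` slots and slot `0` is a dummy unused coordinate. -/
abbrev YV (K : ℕ) := Fin (2*K+1) → ℂ

/-- Access `y_j` by its (1-based) natural-number index. -/
def yv (K : ℕ) (y : YV K) (j : ℕ) : ℂ := y ⟨j % (2*K+1), Nat.mod_lt _ (by omega)⟩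

/-- Partial derivative with respect to `y_i`. -/
def pY (K : ℕ) (i : Fin (2*K+1)) (f : YV K → ℂ) (y : YV K) : ℂ :=
  fderiv ℂ f y (Pi.single i 1)

/-- The log-canonical bracket
`{f, g}_y = (1/4) Σ_{i=1}^{2K−1} y_i y_{i+1} (∂f/∂y_i ∂g/∂y_{i+1} − ∂f/∂y_{i+1} ∂g/∂y_i)`. -/
def lcBr (K : ℕ) (f g : YV K → ℂ) (y : YV K) : ℂ :=
  (1/4 : ℂ) * ∑ i : Fin (2*K-1),
    yv K y ((i:ℕ)+1) * yv K y ((i:ℕ)+2) *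
      (pY K ⟨(i:ℕ)+1, by have := i.isLt; omega⟩ f y *
         pY K ⟨(i:ℕ)+2, by have := i.isLt; omega⟩ g y
       - pY K ⟨(i:ℕ)+2, by have := i.isLt; omega⟩ f y *
         pY K ⟨(i:ℕ)+1, by have := i.isLt; omega⟩ g y)

/-- `nestList [a₁, …, a_m] = 1 + a₁(1 + a₂(⋯(1 + a_m)⋯))`. -/
def nestList : List ℂ → ℂ
  | [] => 1
  | a :: t => 1 + a * nestList t

/-- The Stokes parameters `s_n`, `n = 1, …, 2K+2` (paper's 1-based indexing) of the
cluster parametrization: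
`s_1 = −y_1^{−2}`;
`s_{2k} = (1+y_{2k}²)·∏_{j=1}^{2k} y_j^{2(−1)^{j+1}}` for `k = 1, …, K`;
`s_{2k+1} = −(1+y_{2k+1}²)·∏_{j=1}^{2k+1} y_j^{2(−1)^{j}}` for `k = 1, …, K−1`;
`s_{2K+1} = −∏_{j=1}^{2K} y_j^{2(−1)^{j}}`;
`s_{2K+2} = y_1²·(1+y_2²(1+y_4²(⋯(1+y_{2K}²)⋯)))·∏_{j=1}^{K} y_{2j}^{−4}`. -/
def sY (K : ℕ) (n : ℕ) (y : YV K) : ℂ :=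
  if n = 1 then -(yv K y 1) ^ (-2 : ℤ)
  else if n = 2*K+1 then -∏ j ∈ range (2*K), (yv K y (j+1)) ^ ((-1:ℤ)^(j+1) * 2)
  else if n = 2*K+2 then
    (yv K y 1)^2 * nestList (List.ofFn fun k : Fin K => (yv K y (2*(k:ℕ)+2))^2)
      * ∏ j ∈ range K, (yv K y (2*(j+1))) ^ (-4 : ℤ)
  else if n % 2 = 0 then
    (1 + (yv K y n)^2) * ∏ j ∈ range n, (yv K y (j+1)) ^ ((-1:ℤ)^j * 2)
  else -((1 + (yv K y n)^2) * ∏ j ∈ range n, (yv K y (j+1)) ^ ((-1:ℤ)^(j+1) * 2))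

/-- `λ = ∏_{j=1}^K y_{2j}²`. -/
def lamY (K : ℕ) (y : YV K) : ℂ := ∏ j ∈ range K, (yv K y (2*(j+1)))^2

namespace ClusterAux

/-- Coordinate index (1-based, wrapping), matching `yv`. -/
def I (K : ℕ) (t : ℕ) : Fin (2*K+1) := ⟨t % (2*K+1), Nat.mod_lt _ (by omega)⟩

lemma yv_eq (K : ℕ) (y : YV K) (t : ℕ) : yv K y t = y (I K t) := rfl

lemma I_eq (K t : ℕ) (ht : t < 2*K+1) : I K t = ⟨t, ht⟩ := by
  simp [I, Nat.mod_eq_of_lt ht]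

lemma coord_zpow (K : ℕ) (y : YV K) (i : Fin (2*K+1)) (n : ℤ) (h : y i ≠ 0) :
    HasFDerivAt (fun v : YV K => (v i) ^ n)
      ((n * (y i) ^ (n-1)) • ContinuousLinearMap.proj (R := ℂ) i) y := by
  have h1 : HasFDerivAt (fun v : YV K => v i)
      (ContinuousLinearMap.proj (R := ℂ) i) y := hasFDerivAt_apply i y
  exact (hasDerivAt_zpow n (y i) (Or.inl h)).comp_hasFDerivAt y h1

lemma coord_pow (K : ℕ) (y : YV K) (i : Fin (2*K+1)) (n : ℕ) :
    HasFDerivAt (fun v : YV K => (v i) ^ n)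
      (((n : ℂ) * (y i) ^ (n-1)) • ContinuousLinearMap.proj (R := ℂ) i) y := by
  have h1 : HasFDerivAt (fun v : YV K => v i)
      (ContinuousLinearMap.proj (R := ℂ) i) y := hasFDerivAt_apply i y
  exact (hasDerivAt_pow n (y i)).comp_hasFDerivAt y h1

lemma coord_sq (K : ℕ) (y : YV K) (i : Fin (2*K+1)) :
    HasFDerivAt (fun v : YV K => (v i) ^ 2)
      (((2:ℂ) * (y i)) • ContinuousLinearMap.proj (R := ℂ) i) y := by
  simpa using coord_pow K y i 2

lemma lam_deriv (K : ℕ) (y : YV K) :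
    HasFDerivAt (lamY K)
      ((∑ m ∈ range K, (∏ k ∈ (range K).erase m, (y (I K (2*(k+1))))^2) •
         (((2:ℂ) * (y (I K (2*(m+1))))) • ContinuousLinearMap.proj (R := ℂ) (I K (2*(m+1)))))
        : YV K →L[ℂ] ℂ) y := by
  have hg : ∀ m ∈ range K, HasFDerivAt (fun v : YV K => (v (I K (2*(m+1))))^2)
      ((((2:ℂ) * (y (I K (2*(m+1))))) • ContinuousLinearMap.proj (R := ℂ) (I K (2*(m+1)))
        : YV K →L[ℂ] ℂ)) y := fun m _ => coord_sq K y (I K (2*(m+1)))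
  exact HasFDerivAt.finset_prod (u := range K) hg

lemma pY_lam (K : ℕ) (y : YV K) (hy : ∀ i : Fin (2*K+1), (i:ℕ) ≠ 0 → y i ≠ 0)
    (n : ℕ) (h1 : 1 ≤ n) (h2 : n ≤ 2*K) (hf : n < 2*K+1) :
    pY K ⟨n, hf⟩ (lamY K) y =
      if n % 2 = 0 then 2 * lamY K y * (y ⟨n, hf⟩)⁻¹ else 0 := by
  have hD := lam_deriv K y
  rw [pY, hD.fderiv, ContinuousLinearMap.sum_apply]
  simp only [ContinuousLinearMap.smul_apply, ContinuousLinearMap.proj_apply, smul_eq_mul]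
  have key : ∀ m ∈ range K,
      (∏ k ∈ (range K).erase m, (y (I K (2*(k+1))))^2) *
        ((2*(y (I K (2*(m+1))))) * ((Pi.single (⟨n,hf⟩ : Fin (2*K+1)) (1:ℂ) : YV K) (I K (2*(m+1))))) =
      if 2*(m+1) = n then
        (∏ k ∈ (range K).erase m, (y (I K (2*(k+1))))^2) * (2 * y (I K (2*(m+1)))) else 0 := by
    intro m hm
    have hmK : m < K := mem_range.mp hm
    rw [I_eq K (2*(m+1)) (by omega), Pi.single_apply]
    by_cases h : 2*(m+1) = n
    · simp [h, Fin.ext_iff, I_eq K (2*(m+1)) (by omega)]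
    · have : (⟨2*(m+1), by omega⟩ : Fin (2*K+1)) ≠ ⟨n, hf⟩ := by
        simp [Fin.ext_iff]; omega
      simp [this, h, I_eq K (2*(m+1)) (by omega)]
  rw [Finset.sum_congr rfl key]
  by_cases hpar : n % 2 = 0
  · simp only [hpar, if_true]
    obtain ⟨m0, hm0⟩ : ∃ m0, n = 2*(m0+1) := ⟨n/2 - 1, by omega⟩
    have hm0K : m0 ∈ range K := mem_range.mpr (by omega)
    rw [Finset.sum_eq_single_of_mem m0 hm0K (fun b _ hb => by
      rw [if_neg]; omega)]
    rw [if_pos hm0.symm]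
    have hyn : y (⟨n, hf⟩ : Fin (2*K+1)) ≠ 0 := hy _ (by simp; omega)
    have hIm0 : I K (2*(m0+1)) = ⟨n, hf⟩ := by
      rw [I_eq K _ (by omega)]; simp [Fin.ext_iff, hm0]
    have hlam : lamY K y = (∏ k ∈ (range K).erase m0, (y (I K (2*(k+1))))^2) * (y ⟨n, hf⟩)^2 := by
      rw [lamY]
      rw [← Finset.prod_erase_mul (range K) _ hm0K]
      congr 1
      rw [yv_eq, hIm0]
    rw [hIm0, hlam]
    field_simp
  · simp only [hpar, if_false]
    apply Finset.sum_eq_zero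
    intro m hm
    rw [if_neg]; omega

lemma prod_deriv (K : ℕ) (y : YV K) (hy : ∀ i : Fin (2*K+1), (i:ℕ) ≠ 0 → y i ≠ 0)
    (m : ℕ) (hm : m ≤ 2*K) (e : ℕ → ℤ) :
    HasFDerivAt (fun v : YV K => ∏ i ∈ range m, (v (I K (i+1))) ^ (e i))
      ((∑ i ∈ range m, (∏ k ∈ (range m).erase i, (y (I K (k+1))) ^ (e k)) •
        (((e i : ℂ) * (y (I K (i+1))) ^ (e i - 1)) • ContinuousLinearMap.proj (R := ℂ) (I K (i+1))))
        : YV K →L[ℂ] ℂ) y := by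
  have hg : ∀ i ∈ range m, HasFDerivAt (fun v : YV K => (v (I K (i+1))) ^ (e i))
      ((((e i : ℂ) * (y (I K (i+1))) ^ (e i - 1)) • ContinuousLinearMap.proj (R := ℂ) (I K (i+1)))
        : YV K →L[ℂ] ℂ) y := by
    intro i hi
    have hiK : i < m := mem_range.mp hi
    apply coord_zpow
    apply hy
    rw [I_eq K (i+1) (by omega)]
    simp
  exact HasFDerivAt.finset_prod (u := range m) hg

lemma prod_deriv_eval (K : ℕ) (y : YV K) (m : ℕ) (hm1 : 1 ≤ m) (hm : m ≤ 2*K) (e : ℕ → ℤ)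
    (h1 : (1:ℕ) < 2*K+1) :
    ((∑ i ∈ range m, (∏ k ∈ (range m).erase i, (y (I K (k+1))) ^ (e k)) •
        (((e i : ℂ) * (y (I K (i+1))) ^ (e i - 1)) • ContinuousLinearMap.proj (R := ℂ) (I K (i+1))))
        : YV K →L[ℂ] ℂ) (Pi.single ⟨1, h1⟩ 1)
      = ((e 0 : ℂ) * (y (⟨1, h1⟩ : Fin (2*K+1))) ^ (e 0 - 1)) *
          ∏ k ∈ (range m).erase 0, (y (I K (k+1))) ^ (e k) := by
  rw [ContinuousLinearMap.sum_apply]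
  simp only [ContinuousLinearMap.smul_apply, ContinuousLinearMap.proj_apply, smul_eq_mul]
  rw [Finset.sum_eq_single_of_mem 0 (mem_range.mpr (by omega))]
  · rw [I_eq K 1 h1]
    rw [Pi.single_eq_same]
    ring
  · intro b hb hb0
    have hbm : b < m := mem_range.mp hb
    have hne : I K (b+1) ≠ ⟨1, h1⟩ := by
      rw [I_eq K (b+1) (by omega)]
      simp only [ne_eq, Fin.mk.injEq]
      omega
    rw [Pi.single_apply, if_neg hne]
    ring



lemma zpow_fact (a : ℂ) (ha : a ≠ 0) : a ^ (-3:ℤ) = a ^ (-2:ℤ) * a⁻¹ := by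
  rw [show (-3:ℤ) = -2 + -1 by norm_num, zpow_add₀ ha, zpow_neg_one]

lemma sum_tel (u : ℕ → ℂ) : ∀ K : ℕ, 1 ≤ K →
    ∑ i ∈ range (2*K-1), (if i % 2 = 0 then u (i+1) else -(u (i+2))) = u 1 := by
  intro K
  induction K with
  | zero => omega
  | succ n ih =>
    intro _
    by_cases hn : 1 ≤ n
    · have h2 : 2*(n+1)-1 = (2*n-1) + 1 + 1 := by omega
      rw [h2, Finset.sum_range_succ, Finset.sum_range_succ, ih hn]
      rw [if_neg (by omega), if_pos (by omega)]
      have h3 : 2*n-1+2 = 2*n-1+1+1 := by omega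
      rw [h3]
      ring
    · have hn0 : n = 0 := by omega
      subst hn0
      norm_num

lemma pY_s (K : ℕ) (hK : 1 ≤ K) (y : YV K) (hy : ∀ i : Fin (2*K+1), (i:ℕ) ≠ 0 → y i ≠ 0)
    (h1 : (1:ℕ) < 2*K+1) (j : ℕ) (hodd : Odd j) (hj1 : 1 ≤ j) (hj : j ≤ 2*K+1) :
    pY K ⟨1, h1⟩ (sY K j) y = -2 * sY K j y * (y ⟨1, h1⟩)⁻¹ := by
  have hI1 : I K 1 = ⟨1, h1⟩ := I_eq K 1 h1
  have hy1 : y (⟨1, h1⟩ : Fin (2*K+1)) ≠ 0 := hy _ (by simp)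
  have hjm2 : j % 2 = 1 := Nat.odd_iff.mp hodd
  by_cases hje1 : j = 1
  · subst hje1
    have hfun : sY K 1 = fun v : YV K => -((v (I K 1)) ^ (-2:ℤ)) := by
      funext v; rw [sY, if_pos rfl]; rfl
    simp only [hfun]
    have hD : HasFDerivAt (fun v : YV K => -((v (I K 1)) ^ (-2:ℤ))) _ y :=
      (coord_zpow K y (I K 1) (-2) (by rw [hI1]; exact hy1)).neg
    rw [pY, hD.fderiv]
    simp only [ContinuousLinearMap.neg_apply, ContinuousLinearMap.smul_apply,
      ContinuousLinearMap.proj_apply, smul_eq_mul, hI1, Pi.single_eq_same]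
    rw [show ((-2:ℤ) - 1) = -3 by norm_num, zpow_fact _ hy1]
    push_cast
    ring
  · by_cases hje2 : j = 2*K+1
    · subst hje2
      have hfun : sY K (2*K+1) = fun v : YV K =>
          -∏ i ∈ range (2*K), (v (I K (i+1))) ^ ((-1:ℤ)^(i+1) * 2) := by
        funext v; rw [sY, if_neg (by omega), if_pos rfl]; rfl
      simp only [hfun]
      have hD : HasFDerivAt (fun v : YV K =>
          -∏ i ∈ range (2*K), (v (I K (i+1))) ^ ((-1:ℤ)^(i+1) * 2)) _ y :=
        (prod_deriv K y hy (2*K) le_rfl (fun i => (-1:ℤ)^(i+1) * 2)).neg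
      rw [pY, hD.fderiv, ContinuousLinearMap.neg_apply,
        prod_deriv_eval K y (2*K) (by omega) le_rfl _ h1]
      rw [← Finset.mul_prod_erase (range (2*K)) _ (mem_range.mpr (by omega : 0 < 2*K))]
      rw [hI1]
      rw [show ((-1:ℤ)^(0+1) * 2) = -2 by norm_num, show ((-2:ℤ) - 1) = -3 by norm_num,
        zpow_fact _ hy1]
      push_cast
      ring
    · have hfun : sY K j = fun v : YV K =>
          -((1 + (v (I K j))^2) * ∏ i ∈ range j, (v (I K (i+1))) ^ ((-1:ℤ)^(i+1) * 2)) := by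
        funext v
        rw [sY, if_neg hje1, if_neg hje2, if_neg (by omega), if_neg (by omega)]
        rfl
      simp only [hfun]
      have hA : HasFDerivAt (fun v : YV K => 1 + (v (I K j))^2)
          ((((2:ℂ) * (y (I K j))) • ContinuousLinearMap.proj (R := ℂ) (I K j)) : YV K →L[ℂ] ℂ) y :=
        (coord_sq K y (I K j)).const_add 1
      have hB := prod_deriv K y hy j (by omega) (fun i => (-1:ℤ)^(i+1) * 2)
      have hD : HasFDerivAt (fun v : YV K =>
          -((1 + (v (I K j))^2) * ∏ i ∈ range j, (v (I K (i+1))) ^ ((-1:ℤ)^(i+1) * 2))) _ y :=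
        (hA.mul hB).neg
      rw [pY, hD.fderiv]
      simp only [ContinuousLinearMap.neg_apply, ContinuousLinearMap.add_apply,
        ContinuousLinearMap.smul_apply, smul_eq_mul]
      rw [prod_deriv_eval K y j (by omega) (by omega) _ h1]
      have hprojj : (ContinuousLinearMap.proj (R := ℂ) (I K j) : YV K →L[ℂ] ℂ)
          (Pi.single (⟨1,h1⟩ : Fin (2*K+1)) 1) = 0 := by
        rw [ContinuousLinearMap.proj_apply, Pi.single_apply, if_neg]
        rw [I_eq K j (by omega)]
        simp only [ne_eq, Fin.mk.injEq]
        omega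
      rw [hprojj]
      rw [← Finset.mul_prod_erase (range j) _ (mem_range.mpr (by omega : 0 < j))]
      rw [hI1]
      rw [show ((-1:ℤ)^(0+1) * 2) = -2 by norm_num, show ((-2:ℤ) - 1) = -3 by norm_num,
        zpow_fact _ hy1]
      push_cast
      ring

end ClusterAux

/-- for every odd index `j` with `1 ≤ j ≤ 2K+1`,
`{s_j, λ}_y = −s_j λ`, identically on `(ℂ*)^{2K}`. -/
theorem cluster_bracket_sOdd_lambda (K : ℕ) (hK : 1 ≤ K) (y : YV K)
    (hy : ∀ i : Fin (2*K+1), (i:ℕ) ≠ 0 → y i ≠ 0)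
    (j : ℕ) (hodd : Odd j) (hj1 : 1 ≤ j) (hj : j ≤ 2*K+1) :
    lcBr K (sY K j) (lamY K) y = -(sY K j y * lamY K y) := by
  classical
  have h1 : (1:ℕ) < 2*K+1 := by omega
  have hy1 : y (⟨1, h1⟩ : Fin (2*K+1)) ≠ 0 := hy _ (by simp)
  set u : ℕ → ℂ := fun n => 2 * lamY K y * y (ClusterAux.I K n) * pY K (ClusterAux.I K n) (sY K j) y with hu
  have hterm : ∀ i : Fin (2*K-1),
      yv K y ((i:ℕ)+1) * yv K y ((i:ℕ)+2) *
      (pY K ⟨(i:ℕ)+1, by have := i.isLt; omega⟩ (sY K j) y *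
         pY K ⟨(i:ℕ)+2, by have := i.isLt; omega⟩ (lamY K) y
       - pY K ⟨(i:ℕ)+2, by have := i.isLt; omega⟩ (sY K j) y *
         pY K ⟨(i:ℕ)+1, by have := i.isLt; omega⟩ (lamY K) y)
      = if (i:ℕ) % 2 = 0 then u ((i:ℕ)+1) else -(u ((i:ℕ)+2)) := by
    intro i
    have hi := i.isLt
    have hfa : (i:ℕ)+1 < 2*K+1 := by omega
    have hfb : (i:ℕ)+2 < 2*K+1 := by omega
    rw [ClusterAux.pY_lam K y hy ((i:ℕ)+1) (by omega) (by omega) hfa,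
        ClusterAux.pY_lam K y hy ((i:ℕ)+2) (by omega) (by omega) hfb]
    have hIa : ClusterAux.I K ((i:ℕ)+1) = ⟨(i:ℕ)+1, hfa⟩ := ClusterAux.I_eq K _ hfa
    have hIb : ClusterAux.I K ((i:ℕ)+2) = ⟨(i:ℕ)+2, hfb⟩ := ClusterAux.I_eq K _ hfb
    have hya : y (⟨(i:ℕ)+1, hfa⟩ : Fin (2*K+1)) ≠ 0 := hy _ (by simp)
    have hyb : y (⟨(i:ℕ)+2, hfb⟩ : Fin (2*K+1)) ≠ 0 := hy _ (by simp)
    rw [ClusterAux.yv_eq, ClusterAux.yv_eq]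
    simp only [hu, hIa, hIb]
    have e1 : (if ((i:ℕ)+1) % 2 = 0 then 2 * lamY K y * (y ⟨(i:ℕ)+1, hfa⟩)⁻¹ else 0)
        = if (i:ℕ) % 2 = 0 then 0 else 2 * lamY K y * (y ⟨(i:ℕ)+1, hfa⟩)⁻¹ := by
      by_cases hpar : (i:ℕ) % 2 = 0
      · rw [if_neg (by omega), if_pos hpar]
      · rw [if_pos (by omega), if_neg hpar]
    have e2 : (if ((i:ℕ)+2) % 2 = 0 then 2 * lamY K y * (y ⟨(i:ℕ)+2, hfb⟩)⁻¹ else 0)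
        = if (i:ℕ) % 2 = 0 then 2 * lamY K y * (y ⟨(i:ℕ)+2, hfb⟩)⁻¹ else 0 := by
      by_cases hpar : (i:ℕ) % 2 = 0
      · rw [if_pos (by omega), if_pos hpar]
      · rw [if_neg (by omega), if_neg hpar]
    rw [e1, e2]
    by_cases hpar : (i:ℕ) % 2 = 0
    · simp only [if_pos hpar]
      field_simp
      ring
    · simp only [if_neg hpar]
      field_simp
      ring
  have hmain : lcBr K (sY K j) (lamY K) y =
      (1/4 : ℂ) * ∑ i ∈ range (2*K-1), (if i % 2 = 0 then u (i+1) else -(u (i+2))) := by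
    rw [lcBr]
    congr 1
    rw [← Fin.sum_univ_eq_sum_range (fun n => if n % 2 = 0 then u (n+1) else -(u (n+2))) (2*K-1)]
    exact Finset.sum_congr rfl (fun i _ => hterm i)
  rw [hmain, ClusterAux.sum_tel u K hK, hu]
  simp only [ClusterAux.I_eq K 1 h1]
  rw [ClusterAux.pY_s K hK y hy h1 j hodd hj1 hj]
  field_simp
  ring
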